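/- The function λ is continuous from the right at every x > 0, and continuous from the left at every x > 0 that is s-ary irrational (i.e., whose s-ary expansion is not eventually zero). -/

import Mathlib

open Real Filter Set MeasureTheory Topology
open scoped Classical ENNReal

/-- The Cantor-integer function: apply the digit map `h` to the `s`-ary digits of `n`
and read the result in base `p`. -/
def cantorInt (p s : ℕ) (h : ℕ → ℕ) (n : ℕ) : ℕ :=
  (Nat.digits s n).foldr (fun d acc => h d + p * acc) 0

/-- `b n = a n / n ^ (log_s p)`. -/
noncomputable def cantorB (p s : ℕ) (h : ℕ → ℕ) (n : ℕ) : ℝ :=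
  (cantorInt p s h n : ℝ) / (n : ℝ) ^ Real.logb s p

/-- `a(x) = a_⌊x⌋`. -/
noncomputable def cantorA (p s : ℕ) (h : ℕ → ℕ) (x : ℝ) : ℝ :=
  (cantorInt p s h ⌊x⌋₊ : ℝ)

section Aux

variable {p s : ℕ} {h : ℕ → ℕ}

lemma foldr_lt (hrange : ∀ i, i < s → h i < p) (hp1 : 0 < p) :
    ∀ l : List ℕ, (∀ d ∈ l, d < s) →
      l.foldr (fun d acc => h d + p * acc) 0 < p ^ l.length := by
  intro l
  induction l with
  | nil => intro _; simpa using hp1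
  | cons d t ih =>
    intro hd
    have h1 : h d < p := hrange d (hd d (by simp))
    have h2 := ih (fun e he => hd e (by simp [he]))
    simp only [List.foldr_cons, List.length_cons, pow_succ]
    have e1 : p * (t.foldr (fun d acc => h d + p * acc) 0 + 1)
        = p * t.foldr (fun d acc => h d + p * acc) 0 + p := by ring
    calc h d + p * (t.foldr (fun d acc => h d + p * acc) 0)
        < p * (t.foldr (fun d acc => h d + p * acc) 0 + 1) := by omega
      _ ≤ p * p ^ t.length := by
          exact Nat.mul_le_mul_left p h2
      _ = p ^ t.length * p := by ring

lemma cantorInt_lt (hs : 2 ≤ s) (hrange : ∀ i, i < s → h i < p) (hp1 : 0 < p) (n : ℕ) :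
    cantorInt p s h n < p ^ (Nat.digits s n).length :=
  foldr_lt hrange hp1 _ (fun _ hd => Nat.digits_lt_base (by omega) hd)

lemma cantorInt_rec (hs : 1 < s) {n : ℕ} (hn : n ≠ 0) :
    cantorInt p s h n = h (n % s) + p * cantorInt p s h (n / s) := by
  unfold cantorInt
  rw [Nat.digits_def' hs (Nat.pos_of_ne_zero hn)]
  simp

lemma sandwich_nat (hs : 2 ≤ s) (hrange : ∀ i, i < s → h i < p) (hp1 : 0 < p)
    {y : ℝ} (hy : 1 ≤ y) :
    ∀ k : ℕ, p ^ k * cantorInt p s h ⌊y⌋₊ ≤ cantorInt p s h ⌊(s:ℝ)^k * y⌋₊ ∧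
      cantorInt p s h ⌊(s:ℝ)^k * y⌋₊ < p ^ k * (cantorInt p s h ⌊y⌋₊ + 1) := by
  intro k
  induction k with
  | zero => simp
  | succ k ih =>
    set z : ℝ := (s:ℝ)^k * y with hzdef
    have hs0 : (0:ℝ) < s := by positivity
    have hz : 1 ≤ z := by
      have h1 : (1:ℝ) ≤ (s:ℝ)^k := one_le_pow₀ (by exact_mod_cast by omega : (1:ℝ) ≤ s)
      nlinarith
    have hs1 : (1:ℝ) ≤ (s:ℝ) := by exact_mod_cast by omega
    have hsz : 1 ≤ (s:ℝ) * z := by nlinarith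
    have hrw : (s:ℝ)^(k+1) * y = (s:ℝ) * z := by rw [hzdef]; ring
    rw [hrw]
    set m : ℕ := ⌊(s:ℝ) * z⌋₊ with hm
    have hm0 : m ≠ 0 := by
      have := Nat.floor_pos.mpr hsz
      omega
    have hdiv : m / s = ⌊z⌋₊ := by
      rw [hm, ← Nat.floor_div_natCast, mul_div_cancel_left₀ _ (ne_of_gt hs0)]
    have hrec : cantorInt p s h m = h (m % s) + p * cantorInt p s h ⌊z⌋₊ := by
      rw [cantorInt_rec (by omega) hm0, hdiv]
    have hms : m % s < s := Nat.mod_lt _ (by omega)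
    have hh : h (m % s) < p := hrange _ hms
    obtain ⟨ih1, ih2⟩ := ih
    constructor
    · rw [hrec, pow_succ]
      calc p ^ k * p * cantorInt p s h ⌊y⌋₊ = p * (p ^ k * cantorInt p s h ⌊y⌋₊) := by ring
        _ ≤ p * cantorInt p s h ⌊z⌋₊ := Nat.mul_le_mul_left p ih1
        _ ≤ h (m % s) + p * cantorInt p s h ⌊z⌋₊ := Nat.le_add_left _ _
    · rw [hrec, pow_succ]
      have h3 : cantorInt p s h ⌊z⌋₊ + 1 ≤ p ^ k * (cantorInt p s h ⌊y⌋₊ + 1) := ih2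
      have e1 : p * (cantorInt p s h ⌊z⌋₊ + 1) = p * cantorInt p s h ⌊z⌋₊ + p := by ring
      calc h (m % s) + p * cantorInt p s h ⌊z⌋₊
          < p * (cantorInt p s h ⌊z⌋₊ + 1) := by omega
        _ ≤ p * (p ^ k * (cantorInt p s h ⌊y⌋₊ + 1)) := Nat.mul_le_mul_left p h3
        _ = p ^ k * p * (cantorInt p s h ⌊y⌋₊ + 1) := by ring

lemma spow_theta (hs : 2 ≤ s) (hp : s < p) (k : ℕ) :
    ((s:ℝ)^k) ^ Real.logb s p = (p:ℝ)^k := by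
  have hs0 : (0:ℝ) < s := by exact_mod_cast by omega
  have hs1 : (s:ℝ) ≠ 1 := by exact_mod_cast by omega
  have hp0 : (0:ℝ) < p := by exact_mod_cast by omega
  rw [← Real.rpow_natCast (s:ℝ) k, ← Real.rpow_mul hs0.le, mul_comm,
    Real.rpow_mul hs0.le, Real.rpow_logb hs0 hs1 hp0, Real.rpow_natCast]

lemma cantorInt_le_real (hs : 2 ≤ s) (hp : s < p) (hrange : ∀ i, i < s → h i < p)
    {n : ℕ} (hn : n ≠ 0) :
    (cantorInt p s h n : ℝ) ≤ (p:ℝ) * (n:ℝ) ^ Real.logb s p := by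
  set θ := Real.logb s p
  set L := (Nat.digits s n).length
  have h1 : (cantorInt p s h n : ℝ) < (p:ℝ)^L := by
    exact_mod_cast Nat.cast_lt.mpr (cantorInt_lt hs hrange (by omega) n)
  have h2 : (s:ℕ)^L ≤ s * n := Nat.base_pow_length_digits_le s n (by omega) hn
  have h2' : ((s:ℝ))^L ≤ (s:ℝ) * n := by exact_mod_cast h2
  have hθ : 0 ≤ θ := Real.logb_nonneg (by exact_mod_cast by omega) (by exact_mod_cast by omega)
  have hb : (0:ℝ) ≤ (s:ℝ)^L := by positivity
  have h3 : ((s:ℝ)^L)^θ ≤ ((s:ℝ) * n)^θ := Real.rpow_le_rpow hb h2' hθ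
  have h4 : ((s:ℝ) * n)^θ = (p:ℝ) * (n:ℝ)^θ := by
    rw [Real.mul_rpow (Nat.cast_nonneg s) (Nat.cast_nonneg n)]
    congr 1
    simpa using spow_theta hs hp 1
  calc (cantorInt p s h n : ℝ) ≤ (p:ℝ)^L := h1.le
    _ = ((s:ℝ)^L)^θ := (spow_theta hs hp L).symm
    _ ≤ ((s:ℝ) * n)^θ := h3
    _ = (p:ℝ) * (n:ℝ)^θ := h4

end Aux

section Aux2

variable {p s : ℕ} {h : ℕ → ℕ} {lam : ℝ → ℝ}

lemma lam_mem (hs : 2 ≤ s) (hp : s < p) (hrange : ∀ i, i < s → h i < p)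
    (hlam : ∀ x : ℝ, 0 < x →
      Tendsto (fun k : ℕ => cantorA p s h ((s : ℝ) ^ k * x) / ((s : ℝ) ^ k * x) ^ Real.logb s p)
        atTop (nhds (lam x)))
    {y : ℝ} (hy : 1 ≤ y) :
    (cantorInt p s h ⌊y⌋₊ : ℝ) / y ^ Real.logb s p ≤ lam y ∧
      lam y ≤ ((cantorInt p s h ⌊y⌋₊ : ℝ) + 1) / y ^ Real.logb s p := by
  set θ := Real.logb s p with hθdef
  have hy0 : 0 < y := lt_of_lt_of_le one_pos hy
  have hT := hlam y hy0
  have hyθ : 0 < y ^ θ := Real.rpow_pos_of_pos hy0 θ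
  have hp0 : (0:ℝ) < p := by exact_mod_cast by omega
  have hpk : ∀ k : ℕ, (0:ℝ) < (p:ℝ)^k := fun k => pow_pos hp0 k
  have hden : ∀ k : ℕ, ((s:ℝ)^k * y) ^ θ = (p:ℝ)^k * y ^ θ := by
    intro k
    rw [Real.mul_rpow (by positivity) hy0.le, spow_theta hs hp]
  constructor
  · refine ge_of_tendsto' hT ?_
    intro k
    have h1' : ((p:ℝ))^k * (cantorInt p s h ⌊y⌋₊ : ℝ) ≤ (cantorInt p s h ⌊(s:ℝ)^k * y⌋₊ : ℝ) := by
      exact_mod_cast (sandwich_nat hs hrange (by omega) hy k).1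
    show (cantorInt p s h ⌊y⌋₊ : ℝ) / y ^ θ ≤ cantorA p s h ((s:ℝ)^k * y) / ((s:ℝ)^k * y) ^ θ
    rw [hden k]
    unfold cantorA
    calc (cantorInt p s h ⌊y⌋₊ : ℝ) / y ^ θ
        = ((p:ℝ)^k * (cantorInt p s h ⌊y⌋₊ : ℝ)) / ((p:ℝ)^k * y ^ θ) :=
          (mul_div_mul_left _ _ (ne_of_gt (hpk k))).symm
      _ ≤ (cantorInt p s h ⌊(s:ℝ)^k * y⌋₊ : ℝ) / ((p:ℝ)^k * y ^ θ) := by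
          exact div_le_div_of_nonneg_right h1' (mul_pos (hpk k) hyθ).le
  · refine le_of_tendsto' hT ?_
    intro k
    have h2' : (cantorInt p s h ⌊(s:ℝ)^k * y⌋₊ : ℝ) ≤ (p:ℝ)^k * ((cantorInt p s h ⌊y⌋₊ : ℝ) + 1) := by
      have := (sandwich_nat hs hrange (by omega) hy k).2
      have h2n : cantorInt p s h ⌊(s:ℝ)^k * y⌋₊ ≤ p ^ k * (cantorInt p s h ⌊y⌋₊ + 1) := this.le
      exact_mod_cast h2n
    show cantorA p s h ((s:ℝ)^k * y) / ((s:ℝ)^k * y) ^ θ ≤ ((cantorInt p s h ⌊y⌋₊ : ℝ) + 1) / y ^ θ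
    rw [hden k]
    unfold cantorA
    calc (cantorInt p s h ⌊(s:ℝ)^k * y⌋₊ : ℝ) / ((p:ℝ)^k * y ^ θ)
        ≤ ((p:ℝ)^k * ((cantorInt p s h ⌊y⌋₊ : ℝ) + 1)) / ((p:ℝ)^k * y ^ θ) := by
          exact div_le_div_of_nonneg_right h2' (mul_pos (hpk k) hyθ).le
      _ = ((cantorInt p s h ⌊y⌋₊ : ℝ) + 1) / y ^ θ :=
          mul_div_mul_left _ _ (ne_of_gt (hpk k))

lemma lam_scale (hs : 2 ≤ s) (hlam : ∀ x : ℝ, 0 < x →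
      Tendsto (fun k : ℕ => cantorA p s h ((s : ℝ) ^ k * x) / ((s : ℝ) ^ k * x) ^ Real.logb s p)
        atTop (nhds (lam x)))
    {y : ℝ} (hy : 0 < y) (K : ℕ) : lam ((s:ℝ)^K * y) = lam y := by
  have hs0 : (0:ℝ) < s := by exact_mod_cast by omega
  have harg : ∀ k : ℕ, (s:ℝ)^k * ((s:ℝ)^K * y) = (s:ℝ)^(k+K) * y := by
    intro k; rw [pow_add]; ring
  have h1 := hlam ((s:ℝ)^K * y) (by positivity)
  have h2 := (hlam y hy).comp (tendsto_add_atTop_nat K)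
  refine tendsto_nhds_unique ?_ h2
  simp only [Function.comp_def]
  convert h1 using 2 with k
  rw [harg k]

lemma key_est (hs : 2 ≤ s) (hp : s < p) (hrange : ∀ i, i < s → h i < p)
    (hlam : ∀ x : ℝ, 0 < x →
      Tendsto (fun k : ℕ => cantorA p s h ((s : ℝ) ^ k * x) / ((s : ℝ) ^ k * x) ^ Real.logb s p)
        atTop (nhds (lam x)))
    {u v : ℝ} (hu : 0 < u) (huv : u ≤ v) (K : ℕ)
    (h1 : 1 ≤ (s:ℝ)^K * u) (hfl : ⌊(s:ℝ)^K * u⌋₊ = ⌊(s:ℝ)^K * v⌋₊) :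
    |lam v - lam u| ≤ 1/((s:ℝ)^K * u) ^ Real.logb s p
      + (p:ℝ) * (1 - (u/v) ^ Real.logb s p) := by
  set θ := Real.logb s p with hθdef
  have hv : 0 < v := lt_of_lt_of_le hu huv
  have hs0 : (0:ℝ) < s := by exact_mod_cast by omega
  have hsK : (0:ℝ) < (s:ℝ)^K := pow_pos hs0 K
  have hθ0 : 0 ≤ θ := Real.logb_nonneg (by exact_mod_cast by omega) (by exact_mod_cast by omega)
  have hsu : (0:ℝ) < (s:ℝ)^K * u := by positivity
  have hsv : (0:ℝ) < (s:ℝ)^K * v := by positivity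
  have hsuv : (s:ℝ)^K * u ≤ (s:ℝ)^K * v := by nlinarith
  have h1v : 1 ≤ (s:ℝ)^K * v := le_trans h1 hsuv
  set U := ((s:ℝ)^K * u) ^ θ with hUdef
  set V := ((s:ℝ)^K * v) ^ θ with hVdef
  have hU : 0 < U := Real.rpow_pos_of_pos hsu θ
  have hV : 0 < V := Real.rpow_pos_of_pos hsv θ
  have hUV : U ≤ V := Real.rpow_le_rpow hsu.le hsuv hθ0
  set a : ℝ := (cantorInt p s h ⌊(s:ℝ)^K * u⌋₊ : ℝ) with hadef
  have ha0 : (0:ℝ) ≤ a := Nat.cast_nonneg _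
  have hmu := lam_mem hs hp hrange hlam h1
  have hmv := lam_mem hs hp hrange hlam h1v
  rw [lam_scale hs hlam hu K] at hmu
  rw [lam_scale hs hlam hv K] at hmv
  rw [← hfl] at hmv
  obtain ⟨hmu1, hmu2⟩ := hmu
  obtain ⟨hmv1, hmv2⟩ := hmv
  -- a ≤ p * U
  have hN0 : ⌊(s:ℝ)^K * u⌋₊ ≠ 0 := by
    have := Nat.floor_pos.mpr h1
    omega
  have haU : a ≤ (p:ℝ) * U := by
    have hb1 : a ≤ (p:ℝ) * ((⌊(s:ℝ)^K * u⌋₊ : ℝ)) ^ θ := cantorInt_le_real hs hp hrange hN0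
    have hb2 : ((⌊(s:ℝ)^K * u⌋₊ : ℝ)) ^ θ ≤ U :=
      Real.rpow_le_rpow (Nat.cast_nonneg _) (Nat.floor_le hsu.le) hθ0
    have hp0 : (0:ℝ) ≤ p := Nat.cast_nonneg p
    nlinarith
  have hUVr : U / V = (u/v) ^ θ := by
    rw [hUdef, hVdef, ← Real.div_rpow hsu.le hsv.le, mul_div_mul_left _ _ (ne_of_gt hsK)]
  have habs : |lam v - lam u| ≤ (a+1)/U - a/V := by
    rw [abs_le]
    have hd1 : a / V ≤ a / U := div_le_div_of_nonneg_left ha0 hU hUV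
    have hd2 : (a+1) / V ≤ (a+1) / U := div_le_div_of_nonneg_left (by linarith) hU hUV
    constructor
    · linarith [hmv1, hmu2]
    · linarith [hmv2, hmu1]
  have hfrac : a/U - a/V ≤ (p:ℝ) * (1 - U/V) := by
    have e1 : a/U - a/V = (a/U) * (1 - U/V) := by field_simp
    have e2 : (0:ℝ) ≤ 1 - U/V := by
      have : U/V ≤ 1 := (div_le_one hV).mpr hUV
      linarith
    have e3 : a/U ≤ (p:ℝ) := (div_le_iff₀ hU).mpr haU
    rw [e1]
    exact mul_le_mul_of_nonneg_right e3 e2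
  have hD : (a+1)/U - a/V ≤ 1/U + (p:ℝ) * (1 - U/V) := by
    have : (a+1)/U = a/U + 1/U := by rw [add_div]
    linarith
  rw [← hUVr]
  calc |lam v - lam u| ≤ (a+1)/U - a/V := habs
    _ ≤ 1/U + (p:ℝ) * (1 - U/V) := hD

end Aux2


theorem stmt9 (p s : ℕ) (h : ℕ → ℕ) (hs : 2 ≤ s) (hp : s < p)
    (hmono : ∀ i j, i < j → j < s → h i < h j)
    (hrange : ∀ i, i < s → h i < p)
    (lam : ℝ → ℝ)
    (hlam : ∀ x : ℝ, 0 < x →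
      Tendsto (fun k : ℕ => cantorA p s h ((s : ℝ) ^ k * x) / ((s : ℝ) ^ k * x) ^ Real.logb s p)
        atTop (nhds (lam x))) :
    ∀ x : ℝ, 0 < x →
      ContinuousWithinAt lam (Set.Ici x) x ∧
      ((¬ ∃ a k : ℕ, x = (a : ℝ) / (s : ℝ) ^ k) → ContinuousWithinAt lam (Set.Iic x) x) := by
  intro x hx
  set θ := Real.logb s p with hθdef
  have hs0 : (0:ℝ) < s := by exact_mod_cast by omega
  have hs1 : (1:ℝ) < s := by exact_mod_cast by omega
  have hp0 : (0:ℝ) < p := by exact_mod_cast by omega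
  have hp1 : (1:ℝ) < p := by exact_mod_cast by omega
  have hsp : (s:ℝ) ≤ (p:ℝ) := by exact_mod_cast hp.le
  have hθ1 : 1 ≤ θ := by
    rw [hθdef, ← Real.logb_self_eq_one hs1]
    exact Real.logb_le_logb_of_le hs1 hs0 hsp
  have hθ0 : 0 ≤ θ := le_trans zero_le_one hθ1
  -- a reusable bound: if c > max 1 (2/ε) then 1/c^θ < ε/2
  have hsmall : ∀ ε c : ℝ, 0 < ε → max 1 (2/ε) < c → 1/c^θ < ε/2 := by
    intro ε c hε hc
    have hc1 : (1:ℝ) ≤ c := le_of_lt (lt_of_le_of_lt (le_max_left _ _) hc)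
    have hc2 : 2/ε < c := lt_of_le_of_lt (le_max_right _ _) hc
    have h2e : (0:ℝ) < 2/ε := by positivity
    have hrp : c ≤ c^θ := by
      calc c = c^(1:ℝ) := (Real.rpow_one c).symm
        _ ≤ c^θ := Real.rpow_le_rpow_of_exponent_le hc1 hθ1
    calc 1/c^θ ≤ 1/c := one_div_le_one_div_of_le (by linarith) hrp
      _ < 1/(2/ε) := one_div_lt_one_div_of_lt h2e hc2
      _ = ε/2 := by rw [one_div_div]
  constructor
  · -- right continuity
    rw [Metric.continuousWithinAt_iff]
    intro ε hε
    obtain ⟨K, hK⟩ := pow_unbounded_of_one_lt ((max 1 (2/ε))/x) hs1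
    have hsK : (0:ℝ) < (s:ℝ)^K := pow_pos hs0 K
    have hKx : max 1 (2/ε) < (s:ℝ)^K * x := by
      rw [div_lt_iff₀ hx] at hK
      linarith
    have h1sx : 1 ≤ (s:ℝ)^K * x := le_of_lt (lt_of_le_of_lt (le_max_left _ _) hKx)
    have hterm1 : 1/((s:ℝ)^K * x)^θ < ε/2 := hsmall ε _ hε hKx
    -- second term control
    have c1 : ContinuousAt (fun y : ℝ => x/y) x := continuousAt_const.div continuousAt_id hx.ne'
    have c2 : ContinuousAt (fun t : ℝ => t ^ θ) (x/x) :=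
      Real.continuousAt_rpow_const _ _ (Or.inl (by rw [div_self hx.ne']; norm_num))
    have hgc : ContinuousAt (fun y : ℝ => (p:ℝ) * (1 - (x/y)^θ)) x :=
      continuousAt_const.mul (continuousAt_const.sub (c2.comp c1))
    have hg0 : (p:ℝ) * (1 - (x/x)^θ) = 0 := by
      rw [div_self hx.ne', Real.one_rpow]; ring
    have hev : ∀ᶠ y in nhds x, (p:ℝ) * (1 - (x/y)^θ) < ε/2 := by
      have hvlt : (p:ℝ) * (1 - (x/x)^θ) < ε/2 := by rw [hg0]; positivity
      exact Filter.Tendsto.eventually_lt_const hvlt hgc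
    obtain ⟨δ2, hδ2pos, hδ2⟩ := Metric.eventually_nhds_iff.mp hev
    set N := ⌊(s:ℝ)^K * x⌋₊ with hNdef
    have hN1 : (s:ℝ)^K * x < N + 1 := Nat.lt_floor_add_one _
    have hδ1 : 0 < ((N:ℝ)+1)/(s:ℝ)^K - x := by
      rw [sub_pos, lt_div_iff₀ hsK]
      nlinarith
    refine ⟨min δ2 (((N:ℝ)+1)/(s:ℝ)^K - x), lt_min hδ2pos hδ1, ?_⟩
    intro y hy hdist
    have hxy : x ≤ y := hy
    have hd2 : dist y x < δ2 := lt_of_lt_of_le hdist (min_le_left _ _)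
    have hd1 : y - x < ((N:ℝ)+1)/(s:ℝ)^K - x := by
      have := lt_of_lt_of_le hdist (min_le_right _ _)
      rwa [Real.dist_eq, abs_of_nonneg (by linarith)] at this
    have hy0 : 0 < y := lt_of_lt_of_le hx hxy
    have hyN : (s:ℝ)^K * y < (N:ℝ) + 1 := by
      have hylt : y < ((N:ℝ)+1)/(s:ℝ)^K := by linarith
      rw [lt_div_iff₀ hsK] at hylt
      linarith
    have hfl : ⌊(s:ℝ)^K * x⌋₊ = ⌊(s:ℝ)^K * y⌋₊ := by
      symm
      rw [Nat.floor_eq_iff (mul_nonneg hsK.le hy0.le)]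
      constructor
      · calc (N:ℝ) ≤ (s:ℝ)^K * x := Nat.floor_le (by positivity)
          _ ≤ (s:ℝ)^K * y := by nlinarith
      · push_cast
        linarith [hyN]
    have hkey := key_est hs hp hrange hlam hx hxy K h1sx hfl
    rw [Real.dist_eq]
    calc |lam y - lam x| ≤ 1/((s:ℝ)^K * x)^θ + (p:ℝ)*(1-(x/y)^θ) := hkey
      _ < ε/2 + ε/2 := by
          have := hδ2 hd2
          linarith
      _ = ε := by ring
  · -- left continuity at s-ary irrational
    intro hirr
    rw [Metric.continuousWithinAt_iff]
    intro ε hε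
    obtain ⟨K, hK⟩ := pow_unbounded_of_one_lt ((max 1 (2/ε))/(x/2)) hs1
    have hsK : (0:ℝ) < (s:ℝ)^K := pow_pos hs0 K
    have hx2 : (0:ℝ) < x/2 := by linarith
    have hKx : max 1 (2/ε) < (s:ℝ)^K * (x/2) := by
      rw [div_lt_iff₀ hx2] at hK
      linarith
    have h1sx2 : 1 ≤ (s:ℝ)^K * (x/2) := le_of_lt (lt_of_le_of_lt (le_max_left _ _) hKx)
    have hterm1 : 1/((s:ℝ)^K * (x/2))^θ < ε/2 := hsmall ε _ hε hKx
    have c1 : ContinuousAt (fun y : ℝ => y/x) x := continuousAt_id.div continuousAt_const hx.ne'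
    have c3 : ContinuousAt (fun y : ℝ => (y/x)^θ) x :=
      c1.rpow_const (Or.inl (by rw [div_self hx.ne']; norm_num))
    have hgc : ContinuousAt (fun y : ℝ => (p:ℝ) * (1 - (y/x)^θ)) x :=
      continuousAt_const.mul (continuousAt_const.sub c3)
    have hg0 : (p:ℝ) * (1 - (x/x)^θ) = 0 := by
      rw [div_self hx.ne', Real.one_rpow]; ring
    have hev : ∀ᶠ y in nhds x, (p:ℝ) * (1 - (y/x)^θ) < ε/2 := by
      have hvlt : (p:ℝ) * (1 - (x/x)^θ) < ε/2 := by rw [hg0]; positivity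
      exact Filter.Tendsto.eventually_lt_const hvlt hgc
    obtain ⟨δ2, hδ2pos, hδ2⟩ := Metric.eventually_nhds_iff.mp hev
    set N := ⌊(s:ℝ)^K * x⌋₊ with hNdef
    have hNle : (N:ℝ) ≤ (s:ℝ)^K * x := Nat.floor_le (by positivity)
    have hN1 : (s:ℝ)^K * x < N + 1 := Nat.lt_floor_add_one _
    have hNlt : (N:ℝ) < (s:ℝ)^K * x := by
      rcases lt_or_eq_of_le hNle with hlt | heq
      · exact hlt
      · exfalso
        apply hirr
        exact ⟨N, K, by rw [eq_div_iff hsK.ne']; linarith [heq]⟩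
    have hδ1 : 0 < x - (N:ℝ)/(s:ℝ)^K := by
      rw [sub_pos, div_lt_iff₀ hsK]
      nlinarith
    refine ⟨min (x/2) (min δ2 (x - (N:ℝ)/(s:ℝ)^K)), by positivity, ?_⟩
    intro y hy hdist
    have hyx : y ≤ x := hy
    have habs : x - y < min (x/2) (min δ2 (x - (N:ℝ)/(s:ℝ)^K)) := by
      have := hdist
      rw [Real.dist_eq, abs_of_nonpos (by linarith)] at this
      linarith
    have hy2 : x/2 ≤ y := by
      have := lt_of_lt_of_le habs (min_le_left _ _)
      linarith
    have hy0 : 0 < y := by linarith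
    have hd2 : dist y x < δ2 := lt_of_lt_of_le hdist (by
      calc min (x/2) (min δ2 (x - (N:ℝ)/(s:ℝ)^K)) ≤ min δ2 (x - (N:ℝ)/(s:ℝ)^K) := min_le_right _ _
        _ ≤ δ2 := min_le_left _ _)
    have hd1 : x - y < x - (N:ℝ)/(s:ℝ)^K := by
      have := lt_of_lt_of_le habs (le_trans (min_le_right _ _) (min_le_right _ _))
      linarith
    have hyN : (N:ℝ) < (s:ℝ)^K * y := by
      have hlt : (N:ℝ)/(s:ℝ)^K < y := by linarith
      rw [div_lt_iff₀ hsK] at hlt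
      linarith [hlt]
    have h1sy : 1 ≤ (s:ℝ)^K * y := by
      calc (1:ℝ) ≤ (s:ℝ)^K * (x/2) := h1sx2
        _ ≤ (s:ℝ)^K * y := mul_le_mul_of_nonneg_left hy2 hsK.le
    have hfl : ⌊(s:ℝ)^K * y⌋₊ = ⌊(s:ℝ)^K * x⌋₊ := by
      rw [Nat.floor_eq_iff (mul_nonneg hsK.le hy0.le)]
      constructor
      · exact hyN.le
      · have : (s:ℝ)^K * y ≤ (s:ℝ)^K * x := mul_le_mul_of_nonneg_left hyx hsK.le
        push_cast
        linarith
    have hkey := key_est hs hp hrange hlam hy0 hyx K h1sy hfl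
    rw [Real.dist_eq, abs_sub_comm]
    calc |lam x - lam y| ≤ 1/((s:ℝ)^K * y)^θ + (p:ℝ)*(1-(y/x)^θ) := hkey
      _ ≤ 1/((s:ℝ)^K * (x/2))^θ + (p:ℝ)*(1-(y/x)^θ) := by
          have hmono2 : ((s:ℝ)^K * (x/2))^θ ≤ ((s:ℝ)^K * y)^θ :=
            Real.rpow_le_rpow (by positivity) (mul_le_mul_of_nonneg_left hy2 hsK.le) hθ0
          have hpos : (0:ℝ) < ((s:ℝ)^K * (x/2))^θ := Real.rpow_pos_of_pos (by positivity) θ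
          have := one_div_le_one_div_of_le hpos hmono2
          linarith
      _ < ε/2 + ε/2 := by
          have := hδ2 hd2
          linarith
      _ = ε := by ring
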